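/- Let T1, T2 be q-commuting contractions on H with T = T1T2, Q the positive square root of the SOT-limit of TⁿT*ⁿ, and X1*, X2*, X* the contractions on the closure of the range of Q determined by Xi* Q = Q Ti* and X* Q = Q T*. Then X1* X2* = q X* and X2* X1* = X*; in particular (X1*, X2*) is a q-commuting pair of isometries (since X* and hence qX* is an isometry). -/

import Mathlib

open ContinuousLinearMap Filter
open scoped Topology InnerProductSpace

set_option maxHeartbeats 1000000 in
/-- Let `T1, T2` be `q`-commuting contractions, `T = T1 T2`, `Q` the positive square root
of the SOT-limit of `Tⁿ T*ⁿ`, and `X1*, X2*, X*` the contractions on the closure of the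
range of `Q` determined by `Xᵢ* Q = Q Tᵢ*` and `X* Q = Q T*`.  Then `X1* X2* = q X*` and
`X2* X1* = X*`; in particular `(X1*, X2*)` is a `q`-commuting pair of isometries. -/
theorem qcomm_isometries_on_Q_space
    {H : Type*} [NormedAddCommGroup H] [InnerProductSpace ℂ H] [CompleteSpace H]
    (q : ℂ) (hq : ‖q‖ = 1)
    (T1 T2 : H →L[ℂ] H) (hT1 : ‖T1‖ ≤ 1) (hT2 : ‖T2‖ ≤ 1)
    (hcomm : T1 * T2 = q • (T2 * T1))
    (Q : H →L[ℂ] H) (hQ : Q.IsPositive)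
    (hQlim : ∀ h : H, Tendsto
      (fun n : ℕ => ((T1 * T2) ^ n * (adjoint (T1 * T2)) ^ n) h) atTop (𝓝 ((Q * Q) h)))
    (M : Submodule ℂ H) (hM : M = (LinearMap.range (Q : H →ₗ[ℂ] H)).topologicalClosure)
    (Y1 Y2 Y : M →L[ℂ] M)
    (hY1norm : ‖Y1‖ ≤ 1) (hY2norm : ‖Y2‖ ≤ 1) (hYnorm : ‖Y‖ ≤ 1)
    (hY1 : ∀ (h : H) (x : M), (x : H) = Q h → ((Y1 x : M) : H) = Q (adjoint T1 h))
    (hY2 : ∀ (h : H) (x : M), (x : H) = Q h → ((Y2 x : M) : H) = Q (adjoint T2 h))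
    (hY : ∀ (h : H) (x : M), (x : H) = Q h → ((Y x : M) : H) = Q (adjoint (T1 * T2) h)) :
    Y1 ∘L Y2 = q • Y ∧
    Y2 ∘L Y1 = Y ∧
    Y1 ∘L Y2 = q • (Y2 ∘L Y1) ∧
    (∀ x : M, ‖Y1 x‖ = ‖x‖) ∧
    (∀ x : M, ‖Y2 x‖ = ‖x‖) := by
  have hsa : adjoint Q = Q := by
    rw [← ContinuousLinearMap.star_eq_adjoint]; exact hQ.isSelfAdjoint
  set T : H →L[ℂ] H := T1 * T2 with hT
  -- `T Q² T* = Q²`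
  have hTQT : ∀ h : H, T ((Q * Q) (adjoint T h)) = (Q * Q) h := by
    intro h
    have h1 : Tendsto (fun n : ℕ => T (((T ^ n) * (adjoint T) ^ n) (adjoint T h)))
        atTop (𝓝 (T ((Q * Q) (adjoint T h)))) :=
      (T.continuous.tendsto _).comp (hQlim (adjoint T h))
    have h2 : Tendsto (fun n : ℕ => ((T ^ (n + 1)) * (adjoint T) ^ (n + 1)) h)
        atTop (𝓝 ((Q * Q) h)) := (hQlim h).comp (tendsto_add_atTop_nat 1)
    have heq : (fun n : ℕ => T (((T ^ n) * (adjoint T) ^ n) (adjoint T h)))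
        = fun n : ℕ => ((T ^ (n + 1)) * (adjoint T) ^ (n + 1)) h := by
      funext n
      rw [pow_succ' T n, pow_succ (adjoint T) n]
      simp [mul_apply]
    rw [heq] at h1
    exact tendsto_nhds_unique h1 h2
  -- `‖Q T* h‖ = ‖Q h‖`
  have hiso : ∀ h : H, ‖Q (adjoint T h)‖ = ‖Q h‖ := by
    intro h
    have key : ⟪Q (adjoint T h), Q (adjoint T h)⟫_ℂ = ⟪Q h, Q h⟫_ℂ := by
      calc ⟪Q (adjoint T h), Q (adjoint T h)⟫_ℂ
          = ⟪adjoint Q (adjoint T h), Q (adjoint T h)⟫_ℂ := by rw [hsa]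
        _ = ⟪adjoint T h, Q (Q (adjoint T h))⟫_ℂ := adjoint_inner_left _ _ _
        _ = ⟪h, T (Q (Q (adjoint T h)))⟫_ℂ := adjoint_inner_left _ _ _
        _ = ⟪h, Q (Q h)⟫_ℂ := by
            rw [show Q (Q (adjoint T h)) = (Q * Q) (adjoint T h) from rfl, hTQT h]; rfl
        _ = ⟪adjoint Q h, Q h⟫_ℂ := (adjoint_inner_left _ _ _).symm
        _ = ⟪Q h, Q h⟫_ℂ := by rw [hsa]
    rw [@norm_eq_sqrt_re_inner ℂ, @norm_eq_sqrt_re_inner ℂ, key]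
  -- `q * conj q = 1`
  have hq1 : q * star q = 1 := by
    have h2 : Complex.normSq q = 1 := by
      rw [Complex.normSq_eq_norm_sq, hq, one_pow]
    rw [show (star q) = (starRingEnd ℂ) q from rfl, Complex.mul_conj, h2, Complex.ofReal_one]
  -- adjoint commutation
  have h1 := congrArg star hcomm
  rw [star_mul, star_smul, star_mul] at h1
  have hstar : adjoint T1 * adjoint T2 = q • (adjoint T2 * adjoint T1) := by
    rw [← star_eq_adjoint, ← star_eq_adjoint, h1, smul_smul, hq1, one_smul]
  have hadjT : adjoint T = adjoint T2 * adjoint T1 := by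
    rw [hT, ← star_eq_adjoint, star_mul, star_eq_adjoint, star_eq_adjoint]
  -- density of range Q in M
  have hdense : Dense {x : M | ∃ h : H, (x : H) = Q h} := by
    intro x
    rw [mem_closure_iff_seq_limit]
    have hx : (x : H) ∈ closure ((LinearMap.range (Q : H →ₗ[ℂ] H) : Submodule ℂ H) : Set H) := by
      have h2 : (x : H) ∈ (LinearMap.range (Q : H →ₗ[ℂ] H)).topologicalClosure := hM.le x.2
      rwa [← SetLike.mem_coe, Submodule.topologicalClosure_coe] at h2
    obtain ⟨u, hu, hul⟩ := mem_closure_iff_seq_limit.mp hx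
    have hmem : ∀ n, u n ∈ M :=
      fun n => hM.ge (Submodule.le_topologicalClosure _ (hu n))
    refine ⟨fun n => ⟨u n, hmem n⟩, fun n => ?_, ?_⟩
    · obtain ⟨h, hh⟩ := hu n
      exact ⟨h, hh.symm⟩
    · exact tendsto_subtype_rng.mpr hul
  -- extension principle
  have extM : ∀ (A B : M →L[ℂ] M),
      (∀ (h : H) (x : M), (x : H) = Q h → A x = B x) → A = B := by
    intro A B hAB
    have hfg : Set.EqOn (⇑A) (⇑B) {x : M | ∃ h : H, (x : H) = Q h} := by
      rintro y ⟨h, hy⟩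
      exact hAB h y hy
    exact ContinuousLinearMap.coeFn_injective
      (Continuous.ext_on hdense A.continuous B.continuous hfg)
  have hcomp2 : Y2 ∘L Y1 = Y := by
    apply extM
    intro h x hx
    apply Subtype.coe_injective
    have h1 : ((Y1 x : M) : H) = Q (adjoint T1 h) := hY1 h x hx
    have h2 : ((Y2 (Y1 x) : M) : H) = Q (adjoint T2 (adjoint T1 h)) := hY2 _ _ h1
    have h3 : ((Y x : M) : H) = Q (adjoint T h) := hY h x hx
    show (((Y2 ∘L Y1) x : M) : H) = ((Y x : M) : H)
    rw [comp_apply, h2, h3, hadjT, ContinuousLinearMap.mul_apply]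
  have hcomp1 : Y1 ∘L Y2 = q • Y := by
    apply extM
    intro h x hx
    apply Subtype.coe_injective
    have h1 : ((Y2 x : M) : H) = Q (adjoint T2 h) := hY2 h x hx
    have h2 : ((Y1 (Y2 x) : M) : H) = Q (adjoint T1 (adjoint T2 h)) := hY1 _ _ h1
    have h3 : ((Y x : M) : H) = Q (adjoint T h) := hY h x hx
    have h4 : adjoint T1 (adjoint T2 h) = q • (adjoint T2 (adjoint T1 h)) := by
      have h5 := DFunLike.congr_fun hstar h
      simpa [mul_apply] using h5
    show (((Y1 ∘L Y2) x : M) : H) = (((q • Y) x : M) : H)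
    rw [comp_apply]
    calc ((Y1 (Y2 x) : M) : H) = Q (adjoint T1 (adjoint T2 h)) := h2
      _ = q • Q (adjoint T2 (adjoint T1 h)) := by rw [h4, map_smul]
      _ = q • Q (adjoint T h) := by rw [hadjT, ContinuousLinearMap.mul_apply]
      _ = q • ((Y x : M) : H) := by rw [h3]
      _ = (((q • Y) x : M) : H) := by
          rw [ContinuousLinearMap.smul_apply, Submodule.coe_smul]
  -- Y is isometric on M
  have hYiso : ∀ x : M, ‖Y x‖ = ‖x‖ := by
    have hfg : Set.EqOn (fun x : M => ‖Y x‖) (fun x : M => ‖x‖)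
        {x : M | ∃ h : H, (x : H) = Q h} := by
      rintro x ⟨h, hx⟩
      have h3 : ((Y x : M) : H) = Q (adjoint T h) := hY h x hx
      show ‖Y x‖ = ‖x‖
      rw [← Submodule.norm_coe, h3, hiso, ← hx, Submodule.norm_coe]
    have h8 := Continuous.ext_on hdense (continuous_norm.comp Y.continuous) continuous_norm hfg
    intro x
    exact congrFun h8 x
  have hY1iso : ∀ x : M, ‖Y1 x‖ = ‖x‖ := by
    intro x
    refine le_antisymm ((Y1.le_opNorm x).trans (by nlinarith [norm_nonneg x])) ?_
    calc ‖x‖ = ‖Y x‖ := (hYiso x).symm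
      _ = ‖Y2 (Y1 x)‖ := by rw [← hcomp2]; rfl
      _ ≤ ‖Y2‖ * ‖Y1 x‖ := Y2.le_opNorm _
      _ ≤ 1 * ‖Y1 x‖ := by nlinarith [norm_nonneg (Y1 x)]
      _ = ‖Y1 x‖ := one_mul _
  have hY2iso : ∀ x : M, ‖Y2 x‖ = ‖x‖ := by
    intro x
    refine le_antisymm ((Y2.le_opNorm x).trans (by nlinarith [norm_nonneg x])) ?_
    have hqY : ‖Y1 (Y2 x)‖ = ‖x‖ := by
      have h6 : Y1 (Y2 x) = q • Y x := by
        have h7 := DFunLike.congr_fun hcomp1 x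
        simpa using h7
      rw [h6, norm_smul, hq, one_mul, hYiso]
    calc ‖x‖ = ‖Y1 (Y2 x)‖ := hqY.symm
      _ ≤ ‖Y1‖ * ‖Y2 x‖ := Y1.le_opNorm _
      _ ≤ 1 * ‖Y2 x‖ := by nlinarith [norm_nonneg (Y2 x)]
      _ = ‖Y2 x‖ := one_mul _
  exact ⟨hcomp1, hcomp2, by rw [hcomp1, hcomp2], hY1iso, hY2iso⟩
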